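/- Let k : [0,∞) → ℝ be any function such that for every m ≥ 0, k(m) ∈ [π/4, π/2) and m·sin(2k(m)) + k(m)·cos(2k(m)) = 0, and set E(m) = √(m² + k(m)²). Define u₁^m : [−1,1] → ℂ² by u₁^m(t) = (k(m)·cos(k(m)(t+1)) + (E(m)+m)·sin(k(m)(t+1)), k(m)·cos(k(m)(t+1)) − (E(m)−m)·sin(k(m)(t+1))) and N_m = (∫_{−1}^{1} |u₁^m(t)|²_{ℂ²} dt)^{−1/2}. Then there exist constants C > 0 and m₀ > 0 such that for all m ∈ [0, m₀] there holds |N_m − 1/(2k(m))| ≤ C·m. -/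

import Mathlib

open MeasureTheory Set

/-- `E(m) = √(m² + k(m)²)`. -/
noncomputable def Efun (k : ℝ → ℝ) (m : ℝ) : ℝ := Real.sqrt (m ^ 2 + (k m) ^ 2)

/-- First component of the (unnormalized) transverse eigenfunction `u₁^m`. -/
noncomputable def ua (k : ℝ → ℝ) (m t : ℝ) : ℝ :=
  k m * Real.cos (k m * (t + 1)) + (Efun k m + m) * Real.sin (k m * (t + 1))

/-- Second component of the (unnormalized) transverse eigenfunction `u₁^m`. -/
noncomputable def ub (k : ℝ → ℝ) (m t : ℝ) : ℝ :=
  k m * Real.cos (k m * (t + 1)) - (Efun k m - m) * Real.sin (k m * (t + 1))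

/-- The normalization constant `N_m = (∫_{-1}^1 |u₁^m|²_{ℂ²} dt)^{-1/2}`. -/
noncomputable def Nfun (k : ℝ → ℝ) (m : ℝ) : ℝ :=
  (Real.sqrt (∫ t in (-1 : ℝ)..1, ((ua k m t) ^ 2 + (ub k m t) ^ 2)))⁻¹

set_option maxHeartbeats 1600000 in
/-- The normalization constant of the first transverse eigenfunction
satisfies `N_m = 1/(2 k(m)) + O(m)` as `m → 0⁺`. -/
theorem normalization_asymptotics
    (k : ℝ → ℝ)
    (hk : ∀ m : ℝ, 0 ≤ m → k m ∈ Ico (Real.pi / 4) (Real.pi / 2) ∧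
      m * Real.sin (2 * k m) + k m * Real.cos (2 * k m) = 0) :
    ∃ C > 0, ∃ m₀ > 0, ∀ m ∈ Icc (0 : ℝ) m₀,
      |Nfun k m - 1 / (2 * k m)| ≤ C * m := by
  refine ⟨8, by norm_num, 1, by norm_num, ?_⟩
  intro m hm
  obtain ⟨hm0, hm1⟩ := hm
  obtain ⟨⟨hk1, hk2⟩, _⟩ := hk m hm0
  set a := k m with ha
  have hpi3 : (3:ℝ) < Real.pi := Real.pi_gt_three
  have ha34 : (3/4:ℝ) < a := lt_of_lt_of_le (by linarith) hk1
  have ha0 : (0:ℝ) < a := by linarith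
  have hE : Efun k m ^ 2 = m ^ 2 + a ^ 2 := Real.sq_sqrt (by positivity)
  set I := ∫ t in (-1 : ℝ)..1, ((ua k m t) ^ 2 + (ub k m t) ^ 2) with hIdef
  -- compute the integral
  set F : ℝ → ℝ := fun t =>
    (2*a^2 + 2*m^2) * t - (m^2/a) * Real.sin (2*(a*(t+1))) - m * Real.cos (2*(a*(t+1)))
    with hF
  have hderiv : ∀ t ∈ uIcc (-1:ℝ) 1, HasDerivAt F ((ua k m t) ^ 2 + (ub k m t) ^ 2) t := by
    intro t _
    have h1 : HasDerivAt (fun t : ℝ => 2*(a*(t+1))) (2*a) t := by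
      have := ((hasDerivAt_id t).add_const 1).const_mul (2*a)
      simpa [mul_assoc, mul_comm, mul_left_comm] using this
    have hsin : HasDerivAt (fun t : ℝ => Real.sin (2*(a*(t+1))))
        (Real.cos (2*(a*(t+1))) * (2*a)) t := (Real.hasDerivAt_sin _).comp t h1
    have hcos : HasDerivAt (fun t : ℝ => Real.cos (2*(a*(t+1))))
        (-Real.sin (2*(a*(t+1))) * (2*a)) t := (Real.hasDerivAt_cos _).comp t h1
    have hlin : HasDerivAt (fun t : ℝ => (2*a^2 + 2*m^2) * t) (2*a^2 + 2*m^2) t := by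
      simpa using (hasDerivAt_id t).const_mul (2*a^2 + 2*m^2)
    have hFd := (hlin.sub (hsin.const_mul (m^2/a))).sub (hcos.const_mul m)
    refine (show HasDerivAt F _ t from hFd).congr_deriv (Eq.symm ?_)
    have hc2 := Real.cos_two_mul (a*(t+1))
    have hs2 := Real.sin_two_mul (a*(t+1))
    have hpyth := Real.sin_sq_add_cos_sq (a*(t+1))
    simp only [ua, ub, ← ha]
    set c := Real.cos (a*(t+1))
    set s := Real.sin (a*(t+1))
    rw [hc2, hs2]
    field_simp
    linear_combination (2*s^2) * hE + (2*a^2 + 4*m^2) * hpyth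
  have hcont : Continuous fun t => (ua k m t) ^ 2 + (ub k m t) ^ 2 := by
    unfold ua ub; fun_prop
  have hI : I = F 1 - F (-1) :=
    intervalIntegral.integral_eq_sub_of_hasDerivAt hderiv
      (hcont.intervalIntegrable _ _)
  have hIval : I = 4*a^2 + 4*m^2 - (m^2/a) * Real.sin (4*a) - m * Real.cos (4*a) + m := by
    rw [hI]; simp only [hF]
    norm_num
    ring_nf
  -- bounds on the integral
  have hda : m^2/a ≤ (4/3)*m^2 := by
    rw [div_le_iff₀ ha0]; nlinarith [sq_nonneg m]
  have hda0 : 0 ≤ m^2/a := by positivity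
  have hsin1 := Real.sin_le_one (4*a)
  have hsinm1 := Real.neg_one_le_sin (4*a)
  have hcos1 := Real.cos_le_one (4*a)
  have hcosm1 := Real.neg_one_le_cos (4*a)
  have hsinabs : (m^2/a) * Real.sin (4*a) ≤ (4/3)*m^2 := by nlinarith
  have hsinabs2 : -((4/3)*m^2) ≤ (m^2/a) * Real.sin (4*a) := by nlinarith
  have hIlo : 4*a^2 ≤ I := by rw [hIval]; nlinarith
  have hIhi : I - 4*a^2 ≤ 8*m := by rw [hIval]; nlinarith
  have hI0 : (0:ℝ) ≤ I := by linarith [hIlo, sq_nonneg a]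
  -- the square root
  set s := Real.sqrt I with hs
  have hssq : s^2 = I := Real.sq_sqrt hI0
  have hs2a : 2*a ≤ s := by
    have : Real.sqrt (4*a^2) ≤ s := Real.sqrt_le_sqrt hIlo
    rwa [show (4:ℝ)*a^2 = (2*a)^2 by ring, Real.sqrt_sq (by linarith)] at this
  have hs0 : 0 < s := by linarith
  have hN : Nfun k m = s⁻¹ := rfl
  rw [hN]
  have hle : s⁻¹ ≤ 1/(2*a) := by
    rw [one_div]
    exact inv_anti₀ (by linarith) hs2a
  rw [abs_of_nonpos (by linarith), neg_sub]
  -- 1/(2a) - 1/s = (s - 2a)/(2a s) ≤ 8m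
  have h5 : (0:ℝ) ≤ s - 2*a := by linarith
  have h4 : (3:ℝ) ≤ s + 2*a := by linarith
  have hA : (s - 2*a) * (s + 2*a) ≤ 8*m := by
    have : (s - 2*a) * (s + 2*a) = I - 4*a^2 := by rw [← hssq]; ring
    linarith
  have hB : (s - 2*a) * 3 ≤ (s - 2*a) * (s + 2*a) := mul_le_mul_of_nonneg_left h4 h5
  have hdiff : s - 2*a ≤ 3*m := by linarith
  have heq : 1/(2*a) - s⁻¹ = (s - 2*a)/((2*a)*s) := by
    field_simp
  rw [heq, div_le_iff₀ (by positivity)]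
  have has : (9/8:ℝ) ≤ a*s := by
    nlinarith [mul_le_mul_of_nonneg_left hs2a ha0.le, ha34]
  have key : 0 ≤ m*(16*(a*s) - 18) :=
    mul_nonneg hm0 (by linarith)
  nlinarith [hdiff, key, hm0]
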